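/- Every nonempty planar forest F can be written uniquely as F = (•F_1) ↗ (•F_2) ↗ … ↗ (•F_n) for some n ≥ 1 and planar forests F_1, …, F_n, where •G denotes the forest consisting of the single-vertex tree • followed by G. Consequently the monoid of planar forests under ↗ is freely generated by the forests of the form •G. -/
import Mathlib


/-- Planar rooted trees; `PTree.node []` is the single-vertex tree `•`. -/
inductive PTree : Type
  | node : List PTree → PTree

/-- Planar rooted forests; concatenation is list append, the empty forest is the unit. -/
abbrev Forest : Type := List PTree

/-- Grafting on the left leaf: `F ↗ G` grafts `F` on the leftmost leaf of `G`,
with `F ↗ 1 = F`. -/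
def graftLeaf (F : Forest) : Forest → Forest
  | [] => F
  | .node c :: rest => .node (graftLeaf F c) :: rest

/-- `(•F_1) ↗ (•F_2) ↗ … ↗ (•F_n)`, where `•G` is the forest `PTree.node [] :: G`. -/
def graftLeafProd (L : List Forest) : Forest :=
  (L.map fun G => PTree.node [] :: G).foldr graftLeaf []

/-- The inverse decomposition map. -/
def decomp : Forest → List Forest
  | [] => []
  | .node c :: rest => decomp c ++ [rest]

lemma foldr_graft (L : List Forest) (c rest : Forest) :
    (L.map fun G => PTree.node [] :: G).foldr graftLeaf (.node c :: rest)
      = .node ((L.map fun G => PTree.node [] :: G).foldr graftLeaf c) :: rest := by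
  induction L generalizing c with
  | nil => simp [graftLeafProd, decomp]
  | cons a L ih => simp [ih, graftLeaf]

lemma prod_append (L : List Forest) (a : Forest) :
    graftLeafProd (L ++ [a]) = .node (graftLeafProd L) :: a := by
  unfold graftLeafProd
  rw [List.map_append, List.foldr_append]
  simpa [graftLeaf] using foldr_graft L [] a

lemma dec_prod (L : List Forest) : decomp (graftLeafProd L) = L := by
  induction L using List.reverseRecOn with
  | nil => simp [graftLeafProd, decomp]
  | append_singleton L a ih => rw [prod_append, decomp, ih]

lemma prod_dec : ∀ F : Forest, graftLeafProd (decomp F) = F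
  | [] => by simp [graftLeafProd, decomp]
  | .node c :: rest => by
      rw [decomp, prod_append, prod_dec c]

lemma dec_ne (F : Forest) (hF : F ≠ []) : decomp F ≠ [] := by
  match F with
  | [] => exact absurd rfl hF
  | .node c :: rest => simp [decomp]

/-- Every nonempty planar forest `F` can be written uniquely as
`F = (•F_1) ↗ (•F_2) ↗ … ↗ (•F_n)` with `n ≥ 1`: the monoid of planar forests under
`↗` is freely generated by the forests of the form `•G`. -/
theorem graftLeaf_unique_factorization (F : Forest) (hF : F ≠ []) :
    ∃! L : List Forest, L ≠ [] ∧ F = graftLeafProd L := by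
  refine ⟨decomp F, ⟨dec_ne F hF, (prod_dec F).symm⟩, ?_⟩
  rintro L ⟨-, rfl⟩
  exact (dec_prod L).symm
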